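/- Let E and Z be real inner product spaces, h : E → Z → E any function, s : Z → ℝ any function, z_i ≠ z_j latent codes in Z, and 0 < α ≤ 1. Set z_k = z_i + α • (z_j − z_i), and define the ShapeFlow flow fields f^{ij}(x, t) = s((z_j − z_i)/‖z_j − z_i‖) · ‖z_j − z_i‖ · h x (z_i + t • (z_j − z_i)) and f^{ik}(x, t) = s((z_k − z_i)/‖z_k − z_i‖) · ‖z_k − z_i‖ · h x (z_i + t • (z_k − z_i)). If γ : ℝ → E solves x' = f^{ij}(x, t) on [0, α] (for every t ∈ [0, α], γ has derivative f^{ij}(γ t, t) at t), then the rescaled curve η defined by η t = γ (α t) solves x' = f^{ik}(x, t) on [0, 1]: for every t ∈ [0,1], η has derivative f^{ik}(η t, t) at t. In particular, deforming for time α from z_i toward z_j coincides with deforming for time 1 from z_i toward the intermediate latent code z_k. -/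

import Mathlib

/-- **Consistency of the latent space (Section 3.1).** Let `z_k = z_i + α • (z_j - z_i)`
with `0 < α ≤ 1` and `z_i ≠ z_j`. If `γ` solves `x' = f^{ij} (x, t)` on `[0, α]`, where
`f^{ij} (x, t) = s ((z_j - z_i)/‖z_j - z_i‖) * ‖z_j - z_i‖ • h x (z_i + t • (z_j - z_i))`,
then the rescaled curve `t ↦ γ (α * t)` solves `x' = f^{ik} (x, t)` on `[0, 1]`: deforming
for time `α` from `z_i` toward `z_j` coincides with deforming for time `1` from `z_i`
toward the intermediate latent code `z_k`. -/
theorem shapeflow_latent_consistency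
    {E Z : Type*} [NormedAddCommGroup E] [InnerProductSpace ℝ E]
    [NormedAddCommGroup Z] [InnerProductSpace ℝ Z]
    (h : E → Z → E) (s : Z → ℝ)
    (zi zj : Z) (hne : zi ≠ zj)
    (α : ℝ) (hα0 : 0 < α) (hα1 : α ≤ 1)
    (γ : ℝ → E)
    (hγ : ∀ t ∈ Set.Icc (0 : ℝ) α,
      HasDerivAt γ
        ((s (‖zj - zi‖⁻¹ • (zj - zi)) * ‖zj - zi‖) • h (γ t) (zi + t • (zj - zi))) t) :
    ∀ t ∈ Set.Icc (0 : ℝ) 1,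
      HasDerivAt (fun t => γ (α * t))
        ((s (‖(zi + α • (zj - zi)) - zi‖⁻¹ • ((zi + α • (zj - zi)) - zi)) *
            ‖(zi + α • (zj - zi)) - zi‖) •
          h (γ (α * t)) (zi + t • ((zi + α • (zj - zi)) - zi))) t := by
  intro t ht
  have hd : zi + α • (zj - zi) - zi = α • (zj - zi) := by abel
  have hnorm : ‖α • (zj - zi)‖ = α * ‖zj - zi‖ := by
    rw [norm_smul, Real.norm_of_nonneg hα0.le]
  have hnz : ‖zj - zi‖ ≠ 0 := by
    simp [sub_eq_zero, hne.symm]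
  have hunit : ‖α • (zj - zi)‖⁻¹ • (α • (zj - zi)) = ‖zj - zi‖⁻¹ • (zj - zi) := by
    rw [hnorm, smul_smul, mul_inv]
    congr 1
    field_simp
  have hmem : α * t ∈ Set.Icc (0 : ℝ) α := by
    constructor
    · exact mul_nonneg hα0.le ht.1
    · calc α * t ≤ α * 1 := by nlinarith [ht.2]
        _ = α := mul_one α
  have hlin : HasDerivAt (fun x : ℝ => α * x) α t := by
    simpa using (hasDerivAt_id t).const_mul α
  have H := (hγ (α * t) hmem).scomp t hlin
  rw [hd, hnorm]
  have harg : zi + t • α • (zj - zi) = zi + (α * t) • (zj - zi) := by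
    rw [smul_smul, mul_comm]
  convert H using 1
  · rfl
  rw [show (α * ‖zj - zi‖)⁻¹ • α • (zj - zi) = ‖zj - zi‖⁻¹ • (zj - zi) by
      rw [smul_smul, mul_inv]; congr 1; field_simp,
    harg, smul_smul]
  congr 1
  ring
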